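/- Suppose there exists a utility function u: Q → R that is locally non-satiated and rationalises the pooled dataset {(p_i, q_i)}_{i=1}^N, meaning u(q_i) ≥ u(q) for all q with p_i · q ≤ p_i · q_i. Then for any cyclic sequence of observations i_1, ..., i_k with i_{k+1} = i_1 such that p_{i_ℓ} · q_{i_{ℓ+1}} ≤ p_{i_ℓ} · q_{i_ℓ} for all ℓ, it holds that p_{i_ℓ} · q_{i_{ℓ+1}} = p_{i_ℓ} · q_{i_ℓ} for all ℓ. -/

import Mathlib

/-- necessity direction of Afriat's theorem: if a locally non-satiated
utility function `u` on the consumption space `Q` rationalises the pooled dataset,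
then every cyclic sequence of observations whose consecutive budget valuations are
weakly affordable must in fact satisfy budget equality along the whole cycle. -/
theorem stmt_1 {N K : ℕ} (Q : Set (Fin K → ℝ)) (hQ : ∀ x ∈ Q, ∀ k, 0 ≤ x k)
    (p q : Fin N → Fin K → ℝ)
    (hp : ∀ i k, 0 < p i k) (hqQ : ∀ i, q i ∈ Q)
    (u : (Fin K → ℝ) → ℝ)
    (hlns : ∀ x ∈ Q, ∀ ε > (0 : ℝ), ∃ y ∈ Q, dist y x < ε ∧ u x < u y)
    (hrat : ∀ i, ∀ x ∈ Q, (∑ k, p i k * x k) ≤ (∑ k, p i k * q i k) → u x ≤ u (q i)) :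
    ∀ (n : ℕ) (c : Fin (n + 1) → Fin N),
      (∀ ℓ : Fin (n + 1), ∑ k, p (c ℓ) k * q (c (ℓ + 1)) k ≤ ∑ k, p (c ℓ) k * q (c ℓ) k) →
      ∀ ℓ : Fin (n + 1), ∑ k, p (c ℓ) k * q (c (ℓ + 1)) k = ∑ k, p (c ℓ) k * q (c ℓ) k := by
  intro n c hcyc
  have strict : ∀ i, ∀ x ∈ Q, (∑ k, p i k * x k) < (∑ k, p i k * q i k) → u x < u (q i) := by
    intro i x hx hlt
    set S : ℝ := ∑ k, p i k with hS
    have hS0 : 0 ≤ S := Finset.sum_nonneg fun k _ => (hp i k).le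
    set ε : ℝ := ((∑ k, p i k * q i k) - ∑ k, p i k * x k) / (S + 1) with hε
    have hεpos : 0 < ε := by
      apply div_pos (by linarith) (by linarith)
    obtain ⟨y, hy, hdy, huy⟩ := hlns x hx ε hεpos
    have hby : (∑ k, p i k * y k) ≤ ∑ k, p i k * q i k := by
      have h1 : ∀ k, p i k * y k ≤ p i k * x k + p i k * ε := by
        intro k
        have hk : y k - x k ≤ ε := by
          calc y k - x k ≤ |y k - x k| := le_abs_self _
            _ = dist (y k) (x k) := (Real.dist_eq _ _).symm
            _ ≤ dist y x := dist_le_pi_dist y x k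
            _ ≤ ε := hdy.le
        nlinarith [hp i k]
      have hkey : (S + 1) * ε = (∑ k, p i k * q i k) - ∑ k, p i k * x k := by
        rw [hε]; field_simp
      calc (∑ k, p i k * y k) ≤ ∑ k, (p i k * x k + p i k * ε) :=
            Finset.sum_le_sum (fun k _ => h1 k)
        _ = (∑ k, p i k * x k) + S * ε := by
            rw [Finset.sum_add_distrib, ← Finset.sum_mul]
        _ ≤ (∑ k, p i k * x k) + (S + 1) * ε := by nlinarith
        _ = ∑ k, p i k * q i k := by rw [hkey]; ring
    exact lt_of_lt_of_le huy (hrat i y hy hby)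
  have hle : ∀ m : Fin (n+1), u (q (c (m+1))) ≤ u (q (c m)) :=
    fun m => hrat (c m) (q (c (m+1))) (hqQ _) (hcyc m)
  open Fin.CommRing in
  have hround : ∀ m : Fin (n+1), ∀ j : ℕ, u (q (c (m + (j : Fin (n+1))))) ≤ u (q (c m)) := by
    intro m j
    induction j with
    | zero => simp
    | succ j ih =>
      have hc : (((j+1 : ℕ)) : Fin (n+1)) = (j : Fin (n+1)) + 1 := by push_cast; ring
      rw [hc, ← add_assoc]
      exact (hle _).trans ih
  open Fin.CommRing in
  have ueq : ∀ m : Fin (n+1), u (q (c (m+1))) = u (q (c m)) := by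
    intro m
    refine le_antisymm (hle m) ?_
    have h := hround (m+1) n
    have hcast : (m + 1) + ((n : ℕ) : Fin (n+1)) = m := by
      have h0 : (((n+1 : ℕ)) : Fin (n+1)) = 0 := by
        simp
      have : ((n : ℕ) : Fin (n+1)) + 1 = 0 := by
        rw [← h0]; push_cast; ring
      calc (m + 1) + ((n : ℕ) : Fin (n+1)) = m + (((n : ℕ) : Fin (n+1)) + 1) := by ring
        _ = m := by rw [this]; ring
    rwa [hcast] at h
  intro ℓ
  by_contra hne
  have hlt := lt_of_le_of_ne (hcyc ℓ) hne
  exact absurd (ueq ℓ) (ne_of_lt (strict (c ℓ) (q (c (ℓ+1))) (hqQ _) hlt))
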